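/- A normed space is Bourbaki-complete (with the norm metric) if and only if it is a finite-dimensional Banach space. -/

import Mathlib

/-- m-fold ε-enlargement: `iterBall x ε 0 = ball x ε`, corresponding to B^{m+1}. -/
def iterBall {X : Type*} [PseudoMetricSpace X] (x : X) (ε : ℝ) : ℕ → Set X
  | 0 => Metric.ball x ε
  | (m+1) => ⋃ y ∈ iterBall x ε m, Metric.ball y ε

/-- ε-chainable component of x. -/
def chainBall {X : Type*} [PseudoMetricSpace X] (x : X) (ε : ℝ) : Set X :=
  ⋃ m, iterBall x ε m

/-- Bourbaki-bounded subset of a metric space. -/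
def BourbakiBounded {X : Type*} [PseudoMetricSpace X] (B : Set X) : Prop :=
  ∀ ε > 0, ∃ (m : ℕ) (s : Finset X), B ⊆ ⋃ x ∈ s, iterBall x ε m

/-- α-bounded subset of a metric space. -/
def AlphaBounded {X : Type*} [PseudoMetricSpace X] (B : Set X) : Prop :=
  ∀ ε > 0, ∃ s : Finset X, B ⊆ ⋃ x ∈ s, chainBall x ε

/-- x and y are ε-chained. -/
def Chained {X : Type*} [PseudoMetricSpace X] (ε : ℝ) (x y : X) : Prop :=
  ∃ (n : ℕ) (u : ℕ → X), u 0 = x ∧ u n = y ∧ ∀ k < n, dist (u k) (u (k+1)) < ε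

/-- Bourbaki-Cauchy sequence. -/
def BourbakiCauchy {X : Type*} [PseudoMetricSpace X] (u : ℕ → X) : Prop :=
  ∀ ε > 0, ∃ (m N : ℕ) (x₀ : X), ∀ n ≥ N, u n ∈ iterBall x₀ ε m

/-- Bourbaki-complete metric space. -/
def BourbakiComplete (X : Type*) [PseudoMetricSpace X] : Prop :=
  ∀ u : ℕ → X, BourbakiCauchy u → ∃ x : X, MapClusterPt x Filter.atTop u

open Metric Filter

lemma iterBall_subset {X : Type*} [PseudoMetricSpace X] (x : X) (ε : ℝ) :
    ∀ m, iterBall x ε m ⊆ Metric.ball x ((m+1)*ε) := by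
  intro m
  induction m with
  | zero => simp [iterBall]
  | succ m ih =>
    intro y hy
    simp only [iterBall, Set.mem_iUnion] at hy
    obtain ⟨z, hz, hyz⟩ := hy
    have := ih hz
    simp only [mem_ball] at *
    have : dist y x ≤ dist y z + dist z x := dist_triangle _ _ _
    push_cast
    push_cast at this ih ⊢
    nlinarith [ih hz, mem_ball.mp hyz]

lemma ball_subset_iterBall {X : Type*} [NormedAddCommGroup X] [NormedSpace ℝ X]
    (x : X) (ε : ℝ) (hε : 0 < ε) :
    ∀ m : ℕ, Metric.ball x ((m+1)*ε) ⊆ iterBall x ε m := by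
  intro m
  induction m with
  | zero => simp [iterBall]
  | succ m ih =>
    intro y hy
    rw [mem_ball] at hy
    by_cases hd : dist y x < (m+1)*ε
    · have hy' : y ∈ iterBall x ε m := ih (mem_ball.mpr hd)
      simp only [iterBall, Set.mem_iUnion]
      exact ⟨y, hy', mem_ball_self hε⟩
    · push_neg at hd
      set d := dist y x with hdd
      have hd0 : 0 < d := lt_of_lt_of_le (by positivity) hd
      set η : ℝ := ((m+2)*ε - d)/2 with hη
      have hη0 : 0 < η := by
        push_cast at hy ⊢
        simp only [hη]
        linarith [hy]
      set t : ℝ := ((m+1)*ε - η)/d with ht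
      have ht0 : 0 ≤ t := by
        apply div_nonneg _ hd0.le
        have : η ≤ ε := by
          simp only [hη]
          push_cast
          push_cast at hd
          nlinarith
        nlinarith
      have ht1 : t ≤ 1 := by
        rw [div_le_one hd0]
        push_cast at hd ⊢
        linarith
      set z : X := x + t • (y - x) with hz
      have hzx : dist z x = t * d := by
        rw [hz, dist_eq_norm]
        simp [norm_smul, abs_of_nonneg ht0, hdd, dist_eq_norm]
      have hzy : dist z y = (1 - t) * d := by
        have : z - y = -((1-t) • (y - x)) := by
          rw [hz]; module
        rw [dist_eq_norm, this, norm_neg, norm_smul, Real.norm_eq_abs,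
          abs_of_nonneg (show (0:ℝ) ≤ 1 - t by linarith), ← dist_eq_norm, ← hdd]
      have hz1 : z ∈ iterBall x ε m := by
        apply ih
        rw [mem_ball, hzx, ht, div_mul_cancel₀ _ hd0.ne']
        linarith
      simp only [iterBall, Set.mem_iUnion]
      refine ⟨z, hz1, ?_⟩
      rw [mem_ball, dist_comm, hzy, sub_mul, one_mul, ht, div_mul_cancel₀ _ hd0.ne']
      simp only [hη]
      push_cast
      push_cast at hd
      linarith

lemma bounded_bourbakiCauchy {X : Type*} [NormedAddCommGroup X] [NormedSpace ℝ X]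
    (u : ℕ → X) (R : ℝ) (hR : ∀ n, ‖u n‖ ≤ R) : BourbakiCauchy u := by
  intro ε hε
  obtain ⟨m, hm⟩ := exists_nat_gt (R/ε)
  refine ⟨m, 0, 0, fun n _ => ?_⟩
  apply ball_subset_iterBall 0 ε hε m
  rw [mem_ball, dist_zero_right]
  have : R < m * ε := by
    rw [div_lt_iff₀ hε] at hm
    linarith
  have := hR n
  nlinarith [hε.le, (Nat.cast_nonneg m : (0:ℝ) ≤ m)]

theorem bourbakiComplete_iff_finiteDimensional_banach (X : Type*) [NormedAddCommGroup X]
    [NormedSpace ℝ X] :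
    BourbakiComplete X ↔ (FiniteDimensional ℝ X ∧ CompleteSpace X) := by
  constructor
  · intro h
    constructor
    · by_contra hfin
      obtain ⟨R, f, hR1, hRf, hpair⟩ := exists_seq_norm_le_one_le_norm_sub hfin
      obtain ⟨x, hx⟩ := h f (bounded_bourbakiCauchy f R hRf)
      have hfreq : ∃ᶠ n in atTop, f n ∈ ball x (1/2) :=
        mapClusterPt_iff_frequently.mp hx _ (ball_mem_nhds x (by norm_num))
      obtain ⟨n, hn⟩ := hfreq.exists
      obtain ⟨n', hn'mem, hn'gt⟩ := (hfreq.and_eventually (eventually_gt_atTop n)).exists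
      have h1 : (1:ℝ) ≤ ‖f n - f n'‖ := hpair (by omega : n ≠ n')
      have : dist (f n) (f n') < 1 := by
        calc dist (f n) (f n') ≤ dist (f n) x + dist x (f n') := dist_triangle _ _ _
        _ < 1/2 + 1/2 := by
            have := mem_ball.mp hn
            have := mem_ball.mp hn'mem
            rw [dist_comm x (f n')]
            linarith
        _ = 1 := by norm_num
      rw [dist_eq_norm] at this
      linarith
    · apply Metric.complete_of_cauchySeq_tendsto
      intro u hu
      have hbc : BourbakiCauchy u := by
        intro ε hε
        obtain ⟨N, hN⟩ := Metric.cauchySeq_iff'.mp hu ε hε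
        exact ⟨0, N, u N, fun n hn => mem_ball.mpr (hN n hn)⟩
      obtain ⟨x, hx⟩ := h u hbc
      exact ⟨x, le_nhds_of_cauchy_adhp hu hx⟩
  · rintro ⟨hfd, hc⟩ u hu
    haveI : ProperSpace X := FiniteDimensional.proper ℝ X
    obtain ⟨m, N, x₀, hm⟩ := hu 1 one_pos
    have hcpt : IsCompact (closedBall x₀ (m+1)) := isCompact_closedBall x₀ _
    have hle : map u atTop ≤ 𝓟 (closedBall x₀ (m+1)) := by
      rw [le_principal_iff, mem_map]
      filter_upwards [eventually_ge_atTop N] with n hn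
      have := iterBall_subset x₀ 1 m (hm n hn)
      rw [mem_ball, mul_one] at this
      exact mem_closedBall.mpr (by push_cast at this ⊢; linarith)
    obtain ⟨x, -, hx⟩ := hcpt.exists_clusterPt hle
    exact ⟨x, hx⟩
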